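/- Let a and b be coprime odd integers and let γ ≥ 2 be an integer such that 2^γ exactly divides a + b. Then a positive integer c is 2^1-oddly-good (i.e., 2c divides a^k + b^k for some odd positive integer k) if and only if there exist an integer i with 0 ≤ i ≤ γ - 1 and an odd positive integer d such that c = 2^i·d and either d = 1 or for every prime p dividing d the multiplicative order of a·b^{-1} modulo p is exactly divisible by 2 (2 divides it but 4 does not). -/

import Mathlib

private lemma intCast_zmod_two_eq_one_of_odd {a : ℤ} (ha : Odd a) : (a : ZMod 2) = 1 := by
  obtain ⟨m, rfl⟩ := ha
  push_cast
  have h2 : (2 : ZMod 2) = 0 := by decide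
  rw [h2]; ring

private lemma odd_nat_prod {s : Finset ℕ} {f : ℕ → ℕ} (h : ∀ x ∈ s, Odd (f x)) :
    Odd (∏ x ∈ s, f x) := by
  rw [← Nat.not_even_iff_odd]
  intro hev
  obtain ⟨q, hq, h2q⟩ := (Prime.dvd_finset_prod_iff Nat.prime_two.prime f).mp hev.two_dvd
  obtain ⟨t, ht⟩ := h q hq
  obtain ⟨s', hs'⟩ := h2q
  omega

private lemma aux_odd_factor (a b : ℤ) (ha : Odd a) (hb : Odd b) {k : ℕ} (hk : Odd k) :
    ∃ S : ℤ, Odd S ∧ a ^ k + b ^ k = (a + b) * S := by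
  refine ⟨∑ i ∈ Finset.range k, a ^ i * (-b) ^ (k - 1 - i), ?_, ?_⟩
  · rw [← Int.not_even_iff_odd]
    intro hev
    have hdvd2 : ((∑ i ∈ Finset.range k, a ^ i * (-b) ^ (k - 1 - i) : ℤ) : ZMod 2) = 0 :=
      (ZMod.intCast_zmod_eq_zero_iff_dvd _ 2).mpr hev.two_dvd
    have hcast : ((∑ i ∈ Finset.range k, a ^ i * (-b) ^ (k - 1 - i) : ℤ) : ZMod 2)
        = (k : ZMod 2) := by
      push_cast
      rw [intCast_zmod_two_eq_one_of_odd ha, intCast_zmod_two_eq_one_of_odd hb]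
      have hneg : (-(1 : ZMod 2)) = 1 := by decide
      simp [hneg]
    rw [hcast] at hdvd2
    obtain ⟨t, rfl⟩ := hk
    push_cast at hdvd2
    have h2 : (2 : ZMod 2) = 0 := by decide
    rw [h2] at hdvd2
    simp at hdvd2
  · have h := geom_sum₂_mul a (-b) k
    rw [sub_neg_eq_add, hk.neg_pow, sub_neg_eq_add] at h
    rw [mul_comm]; exact h.symm

private lemma aux_two_exact (a b : ℤ) (ha : Odd a) (hb : Odd b) (γ : ℕ)
    (hdvd : (2 : ℤ) ^ γ ∣ a + b) (hndvd : ¬ (2 : ℤ) ^ (γ + 1) ∣ a + b) {k : ℕ} (hk : Odd k) :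
    (2 : ℤ) ^ γ ∣ a ^ k + b ^ k ∧ ¬ (2 : ℤ) ^ (γ + 1) ∣ a ^ k + b ^ k := by
  obtain ⟨S, hS, hfac⟩ := aux_odd_factor a b ha hb hk
  obtain ⟨u, hu⟩ := hdvd
  have hu_odd : Odd u := by
    rw [← Int.not_even_iff_odd]
    intro hev
    obtain ⟨v, rfl⟩ := hev.two_dvd
    exact hndvd ⟨v, by rw [hu]; ring⟩
  constructor
  · exact dvd_trans ⟨u, hu⟩ (hfac ▸ Dvd.intro S rfl)
  · rintro ⟨w, hw⟩
    have h2 : (2 : ℤ) ^ γ * (u * S) = 2 ^ γ * (2 * w) := by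
      rw [← mul_assoc, ← hu, ← hfac, hw]; ring
    have h3 := mul_left_cancel₀ (pow_ne_zero γ (two_ne_zero)) h2
    have h4 : Even (u * S) := ⟨w, by linarith⟩
    exact (Int.not_odd_iff_even.mpr h4) (hu_odd.mul hS)

private lemma aux_lte_step (p : ℕ) (hpodd : Odd p) (X Y : ℤ) (e : ℕ)
    (he : 1 ≤ e) (h : ((p : ℤ)) ^ e ∣ X + Y) : ((p : ℤ)) ^ (e + 1) ∣ X ^ p + Y ^ p := by
  have hgeom := geom_sum₂_mul X (-Y) p
  rw [sub_neg_eq_add, hpodd.neg_pow, sub_neg_eq_add] at hgeom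
  have hpdvd : (p : ℤ) ∣ X + Y := dvd_trans (dvd_pow_self (p : ℤ) (by omega)) h
  have hpT : (p : ℤ) ∣ ∑ i ∈ Finset.range p, X ^ i * (-Y) ^ (p - 1 - i) := by
    rw [← ZMod.intCast_zmod_eq_zero_iff_dvd]
    have hXY : ((Y : ZMod p)) = -(X : ZMod p) := by
      have h0 : ((X + Y : ℤ) : ZMod p) = 0 := by
        rw [ZMod.intCast_zmod_eq_zero_iff_dvd]; exact hpdvd
      push_cast at h0
      linear_combination h0
    push_cast
    calc ∑ i ∈ Finset.range p, (X : ZMod p) ^ i * (-(Y : ZMod p)) ^ (p - 1 - i)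
        = ∑ i ∈ Finset.range p, (X : ZMod p) ^ (p - 1) := by
          refine Finset.sum_congr rfl fun i hi => ?_
          rw [hXY, neg_neg, ← pow_add]
          congr 1
          have := Finset.mem_range.mp hi
          omega
      _ = 0 := by
          rw [Finset.sum_const, Finset.card_range, nsmul_eq_mul, ZMod.natCast_self, zero_mul]
  obtain ⟨t, ht⟩ := hpT
  obtain ⟨s, hs⟩ := h
  rw [← hgeom, hs, ht]
  exact ⟨t * s, by ring⟩

private lemma aux_pow_lift (p : ℕ) (hpodd : Odd p) (a b : ℤ) {k : ℕ}
    (h : (p : ℤ) ∣ a ^ k + b ^ k) (e : ℕ) :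
    (p : ℤ) ^ (e + 1) ∣ a ^ (k * p ^ e) + b ^ (k * p ^ e) := by
  induction e with
  | zero => simpa using h
  | succ e ih =>
      have hstep := aux_lte_step p hpodd (a ^ (k * p ^ e)) (b ^ (k * p ^ e)) (e + 1)
        (by omega) ih
      rw [← pow_mul, ← pow_mul] at hstep
      have hexp : k * p ^ (e + 1) = k * p ^ e * p := by ring
      rw [hexp]
      exact hstep

private lemma orderOf_zero_zmod (p : ℕ) [Fact p.Prime] : orderOf (0 : ZMod p) = 0 := by
  rw [orderOf_eq_zero_iff, isOfFinOrder_iff_pow_eq_one]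
  rintro ⟨n, hn, hpow⟩
  rw [zero_pow hn.ne'] at hpow
  exact zero_ne_one hpow

private lemma aux_order_to_dvd (a b : ℤ) (p : ℕ) (hp : p.Prime)
    (h2 : 2 ∣ orderOf ((a : ZMod p) * (b : ZMod p)⁻¹))
    (h4 : ¬ 4 ∣ orderOf ((a : ZMod p) * (b : ZMod p)⁻¹)) :
    ∃ k : ℕ, 0 < k ∧ Odd k ∧ (p : ℤ) ∣ a ^ k + b ^ k := by
  haveI := Fact.mk hp
  set x := (a : ZMod p) * (b : ZMod p)⁻¹ with hx
  obtain ⟨m, hm⟩ := h2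
  have hm_odd : Odd m := by
    rcases Nat.even_or_odd m with ⟨t, rfl⟩ | ho
    · exact absurd (hm ▸ ⟨t, by ring⟩) h4
    · exact ho
  have hmpos : 0 < m := hm_odd.pos
  have hord_ne : orderOf x ≠ 0 := by rw [hm]; omega
  have hb0 : (b : ZMod p) ≠ 0 := by
    intro hb
    apply hord_ne
    rw [hx, hb, inv_zero, mul_zero]
    exact orderOf_zero_zmod p
  have hy1 : x ^ m * x ^ m = 1 := by
    rw [← pow_add]
    have hmm : m + m = orderOf x := by omega
    rw [hmm]; exact pow_orderOf_eq_one x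
  have hy2 : x ^ m ≠ 1 := by
    intro h1
    have hdd := orderOf_dvd_of_pow_eq_one h1
    rw [hm] at hdd
    have := Nat.le_of_dvd hmpos hdd
    omega
  have hym : x ^ m = -1 := by
    have hfac : (x ^ m - 1) * (x ^ m + 1) = 0 := by linear_combination hy1
    rcases mul_eq_zero.mp hfac with h | h
    · exact absurd (by linear_combination h) hy2
    · linear_combination h
  have habm : (a : ZMod p) ^ m = -(b : ZMod p) ^ m := by
    rw [hx, mul_pow, inv_pow] at hym
    field_simp at hym
    linear_combination hym
  refine ⟨m, hmpos, hm_odd, ?_⟩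
  rw [← ZMod.intCast_zmod_eq_zero_iff_dvd]
  push_cast
  rw [habm]
  ring

private lemma aux_dvd_to_order (a b : ℤ) (hco : IsCoprime a b) (p : ℕ) (hp : p.Prime)
    (hpodd : Odd p) {k : ℕ} (hk : Odd k) (h : (p : ℤ) ∣ a ^ k + b ^ k) :
    2 ∣ orderOf ((a : ZMod p) * (b : ZMod p)⁻¹) ∧
      ¬ 4 ∣ orderOf ((a : ZMod p) * (b : ZMod p)⁻¹) := by
  haveI := Fact.mk hp
  have hpint : Prime (p : ℤ) := Nat.prime_iff_prime_int.mp hp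
  have hpb : ¬ (p : ℤ) ∣ b := by
    intro hbdvd
    have hbk : (p : ℤ) ∣ b ^ k := dvd_pow hbdvd hk.pos.ne'
    have hak : (p : ℤ) ∣ a ^ k := (dvd_add_left hbk).mp h
    have ha' : (p : ℤ) ∣ a := hpint.dvd_of_dvd_pow hak
    exact hpint.not_unit (hco.isUnit_of_dvd' ha' hbdvd)
  have hb0 : (b : ZMod p) ≠ 0 := by
    rwa [Ne, ZMod.intCast_zmod_eq_zero_iff_dvd]
  set x := (a : ZMod p) * (b : ZMod p)⁻¹ with hx
  have habk : (a : ZMod p) ^ k = -(b : ZMod p) ^ k := by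
    have h0 : ((a ^ k + b ^ k : ℤ) : ZMod p) = 0 := by
      rw [ZMod.intCast_zmod_eq_zero_iff_dvd]; exact h
    push_cast at h0
    linear_combination h0
  have hxk : x ^ k = -1 := by
    rw [hx, mul_pow, inv_pow, habk]
    field_simp
  have hp2 : 2 < p := by
    have := hp.two_le
    rcases hpodd with ⟨t, ht⟩
    omega
  haveI : Fact (2 < p) := ⟨hp2⟩
  have hneg1 : (-1 : ZMod p) ≠ 1 := ZMod.neg_one_ne_one
  have hxk1 : x ^ k ≠ 1 := by rw [hxk]; exact hneg1
  have hndvdk : ¬ orderOf x ∣ k := fun hd => hxk1 (orderOf_dvd_iff_pow_eq_one.mp hd)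
  have hdvd2k : orderOf x ∣ k * 2 := by
    apply orderOf_dvd_of_pow_eq_one
    rw [pow_mul, hxk]
    ring
  constructor
  · rcases Nat.even_or_odd (orderOf x) with he | ho
    · exact he.two_dvd
    · exfalso
      apply hndvdk
      have hcop : Nat.Coprime (orderOf x) 2 := by
        rw [Nat.coprime_comm]
        refine (Nat.Prime.coprime_iff_not_dvd Nat.prime_two).mpr ?_
        intro hdd
        obtain ⟨t, ht⟩ := ho
        obtain ⟨s, hs⟩ := hdd
        omega
      exact hcop.dvd_of_dvd_mul_right hdvd2k
  · intro h4
    obtain ⟨s, hs⟩ := dvd_trans h4 hdvd2k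
    obtain ⟨t, ht⟩ := hk
    omega

private lemma aux_combine (a b : ℤ) (d : ℕ) (hd : 0 < d) (hdodd : Odd d)
    (hcond : ∀ p : ℕ, p.Prime → p ∣ d → ∃ k : ℕ, 0 < k ∧ Odd k ∧ (p : ℤ) ∣ a ^ k + b ^ k) :
    ∃ K : ℕ, 0 < K ∧ Odd K ∧ (d : ℤ) ∣ a ^ K + b ^ K := by
  classical
  have hpodd : ∀ p : ℕ, p ∣ d → Odd p := by
    intro p hpd
    rcases Nat.even_or_odd p with he | ho
    · exfalso
      obtain ⟨u, hu⟩ := dvd_trans he.two_dvd hpd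
      obtain ⟨v, hv⟩ := hdodd
      omega
    · exact ho
  set g : ℕ → ℕ := fun p =>
    if h : p.Prime ∧ p ∣ d then (hcond p h.1 h.2).choose * p ^ (d.factorization p - 1)
    else 1 with hg
  have hg_odd : ∀ p ∈ d.primeFactors, Odd (g p) := by
    intro p hpmem
    have hp := Nat.prime_of_mem_primeFactors hpmem
    have hpd := Nat.dvd_of_mem_primeFactors hpmem
    rw [hg]
    simp only [dif_pos (And.intro hp hpd)]
    exact ((hcond p hp hpd).choose_spec.2.1).mul ((hpodd p hpd).pow)
  set K : ℕ := ∏ p ∈ d.primeFactors, g p with hK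
  have hK_odd : Odd K := odd_nat_prod hg_odd
  have hK_pos : 0 < K := Finset.prod_pos fun p hp => (hg_odd p hp).pos
  refine ⟨K, hK_pos, hK_odd, ?_⟩
  have hd_eq : (∏ p ∈ d.primeFactors, p ^ d.factorization p) = d :=
    Nat.factorization_prod_pow_eq_self hd.ne'
  rw [← hd_eq]
  push_cast
  apply Finset.prod_dvd_of_coprime
  · intro p hp q hq hne
    simp only [Function.onFun]
    exact (Nat.Coprime.isCoprime ((Nat.coprime_primes
      (Nat.prime_of_mem_primeFactors hp) (Nat.prime_of_mem_primeFactors hq)).mpr hne)).pow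
  · intro p hpmem
    have hp := Nat.prime_of_mem_primeFactors hpmem
    have hpd := Nat.dvd_of_mem_primeFactors hpmem
    have he : 1 ≤ d.factorization p := by
      have := (Nat.Prime.factorization_pos_of_dvd hp hd.ne' hpd)
      omega
    obtain ⟨hkpos, hkodd, hkdvd⟩ := (hcond p hp hpd).choose_spec
    have hlift := aux_pow_lift p (hpodd p hpd) a b hkdvd (d.factorization p - 1)
    rw [show d.factorization p - 1 + 1 = d.factorization p by omega] at hlift
    have hgp : g p = (hcond p hp hpd).choose * p ^ (d.factorization p - 1) := by
      rw [hg]; simp only [dif_pos (And.intro hp hpd)]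
    have hR_odd : Odd (∏ q ∈ d.primeFactors.erase p, g q) :=
      odd_nat_prod fun q hq => hg_odd q (Finset.mem_of_mem_erase hq)
    have hKsplit : K = g p * ∏ q ∈ d.primeFactors.erase p, g q := by
      rw [hK, Finset.mul_prod_erase _ _ hpmem]
    have hchain : a ^ (g p) + b ^ (g p) ∣ a ^ K + b ^ K := by
      have hdd := Odd.add_dvd_pow_add_pow (a ^ (g p)) (b ^ (g p)) hR_odd
      rw [← pow_mul, ← pow_mul, ← hKsplit] at hdd
      exact hdd
    refine dvd_trans ?_ hchain
    rw [hgp]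
    exact hlift

theorem two_oddly_good_iff
    (a b : ℤ) (ha : Odd a) (hb : Odd b) (hco : IsCoprime a b)
    (γ : ℕ) (hγ : 2 ≤ γ) (hdvd : (2 ^ γ : ℤ) ∣ a + b) (hndvd : ¬ (2 ^ (γ + 1) : ℤ) ∣ a + b)
    (c : ℕ) (hc : 0 < c) :
    (∃ k : ℕ, 0 < k ∧ Odd k ∧ ((2 * c : ℕ) : ℤ) ∣ a ^ k + b ^ k) ↔
      ∃ i d : ℕ, i ≤ γ - 1 ∧ 0 < d ∧ Odd d ∧ c = 2 ^ i * d ∧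
        (d = 1 ∨ ∀ p : ℕ, p.Prime → p ∣ d →
          2 ∣ orderOf ((a : ZMod p) * (b : ZMod p)⁻¹) ∧
            ¬ 4 ∣ orderOf ((a : ZMod p) * (b : ZMod p)⁻¹)) := by
  constructor
  · rintro ⟨k, hk0, hkodd, h2c⟩
    set i := c.factorization 2 with hidef
    have hcd : 2 ^ i * (c / 2 ^ i) = c := Nat.ordProj_mul_ordCompl_eq_self c 2
    have hd_odd : Odd (c / 2 ^ i) := by
      have hnd := Nat.not_dvd_ordCompl Nat.prime_two hc.ne'
      rw [← Nat.not_even_iff_odd]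
      intro hev
      exact hnd hev.two_dvd
    have hd_pos : 0 < c / 2 ^ i := Nat.ordCompl_pos 2 hc.ne'
    refine ⟨i, c / 2 ^ i, ?_, hd_pos, hd_odd, hcd.symm, Or.inr ?_⟩
    · by_contra hgt
      push_neg at hgt
      have hle : γ + 1 ≤ i + 1 := by omega
      have hnat : 2 * c = 2 ^ (i + 1) * (c / 2 ^ i) := by
        conv_lhs => rw [← hcd]
        ring
      have h1 : (2 : ℤ) ^ (i + 1) ∣ ((2 * c : ℕ) : ℤ) := by
        rw [hnat]
        push_cast
        exact Dvd.intro _ rfl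
      have h2 : (2 : ℤ) ^ (γ + 1) ∣ a ^ k + b ^ k :=
        dvd_trans (dvd_trans (pow_dvd_pow 2 hle) h1) h2c
      exact (aux_two_exact a b ha hb γ hdvd hndvd hkodd).2 h2
    · intro p hp hpd
      have hp_odd : Odd p := by
        rcases Nat.even_or_odd p with he | ho
        · exfalso
          obtain ⟨u, hu⟩ := dvd_trans he.two_dvd hpd
          obtain ⟨v, hv⟩ := hd_odd
          omega
        · exact ho
      have hpc : (p : ℤ) ∣ a ^ k + b ^ k := by
        refine dvd_trans ?_ h2c
        have : p ∣ 2 * c := dvd_trans (dvd_trans hpd (Nat.ordCompl_dvd c 2)) (dvd_mul_left c 2)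
        exact_mod_cast Int.natCast_dvd_natCast.mpr this
      exact aux_dvd_to_order a b hco p hp hp_odd hkodd hpc
  · rintro ⟨i, d, hi, hd0, hdodd, hc_eq, hcond⟩
    have hcond' : ∀ p : ℕ, p.Prime → p ∣ d → ∃ k : ℕ, 0 < k ∧ Odd k ∧ (p : ℤ) ∣ a ^ k + b ^ k := by
      intro p hp hpd
      rcases hcond with h1 | h2
      · subst h1
        exact absurd (Nat.dvd_one.mp hpd) hp.ne_one
      · exact aux_order_to_dvd a b p hp (h2 p hp hpd).1 (h2 p hp hpd).2
    obtain ⟨K, hK0, hKodd, hKdvd⟩ := aux_combine a b d hd0 hdodd hcond'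
    refine ⟨K, hK0, hKodd, ?_⟩
    have h2part : (2 : ℤ) ^ (i + 1) ∣ a ^ K + b ^ K :=
      dvd_trans (dvd_trans (pow_dvd_pow 2 (by omega : i + 1 ≤ γ)) hdvd)
        (Odd.add_dvd_pow_add_pow a b hKodd)
    have hcop : IsCoprime ((2 : ℤ) ^ (i + 1)) ((d : ℤ)) := by
      have hnc : Nat.Coprime (2 ^ (i + 1)) d := by
        refine Nat.Coprime.pow_left _ ?_
        refine (Nat.Prime.coprime_iff_not_dvd Nat.prime_two).mpr ?_
        intro h2d
        obtain ⟨t, ht⟩ := hdodd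
        obtain ⟨s, hs⟩ := h2d
        omega
      have h := hnc.isCoprime
      push_cast at h
      exact h
    have hmul := hcop.mul_dvd h2part hKdvd
    have hcast : ((2 * c : ℕ) : ℤ) = 2 ^ (i + 1) * d := by
      subst hc_eq
      push_cast
      ring
    rw [hcast]
    exact hmul
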